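/- Let P_L, P_F, M be metric spaces with metrics written ‖·−·‖₁ (probability simplices with ℓ1 metric). Suppose BR_F : P_L × M → P_F satisfies ‖BR_F(π_L, μ) − BR_F(π_L′, μ′)‖₁ ≤ d_F^L ‖π_L − π_L′‖₁ + d_F^μ ‖μ − μ′‖₁, and Γ : M × P_L × P_F → M satisfies ‖Γ(μ, π_L, π_F) − Γ(μ′, π_L′, π_F′)‖₁ ≤ d_μ^μ ‖μ − μ′‖₁ + d_μ^L ‖π_L − π_L′‖₁ + d_μ^F ‖π_F − π_F′‖₁, with all constants nonnegative and d_F^μ + d_μ^μ + d_μ^F < 1. Suppose for π_L and π_L′ there are fixed points (π_F*, μ*) and (π_F*′, μ*′) satisfying π_F* = BR_F(π_L, μ*), μ* = Γ(μ*, π_L, π_F*), and likewise for the primed quantities. Then ‖π_F* − π_F*′‖₁ + ‖μ* − μ*′‖₁ ≤ ((d_F^L + d_μ^L)/(1 − (d_F^μ + d_μ^μ + d_μ^F))) · ‖π_L − π_L′‖₁. -/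
import Mathlib

/-- Lipschitz dependence of the follower-side equilibrium on the leader's policy.
If `BR_F` and `Γ` are Lipschitz with the stated constants and
`d_F^μ + d_μ^μ + d_μ^F < 1`, and `(π_F*, μ*)`, `(π_F*′, μ*′)` are the
follower/mean-field fixed points associated with `π_L` and `π_L′`, then
`‖π_F* − π_F*′‖ + ‖μ* − μ*′‖ ≤ ((d_F^L + d_μ^L)/(1 − (d_F^μ + d_μ^μ + d_μ^F))) ‖π_L − π_L′‖`. -/
theorem follower_equilibrium_lipschitz_in_leader
    {PL PF M : Type*} [MetricSpace PL] [MetricSpace PF] [MetricSpace M]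
    (BRF : PL → M → PF) (Γ : M → PL → PF → M)
    (dFL dFμ dμμ dμL dμF : ℝ)
    (hdFL : 0 ≤ dFL) (hdFμ : 0 ≤ dFμ) (hdμμ : 0 ≤ dμμ) (hdμL : 0 ≤ dμL) (hdμF : 0 ≤ dμF)
    (hBRF : ∀ (πL πL' : PL) (μ μ' : M),
      dist (BRF πL μ) (BRF πL' μ') ≤ dFL * dist πL πL' + dFμ * dist μ μ')
    (hΓ : ∀ (μ μ' : M) (πL πL' : PL) (πF πF' : PF),
      dist (Γ μ πL πF) (Γ μ' πL' πF')
        ≤ dμμ * dist μ μ' + dμL * dist πL πL' + dμF * dist πF πF')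
    (hsum : dFμ + dμμ + dμF < 1)
    (πL πL' : PL) (πF πF' : PF) (μ μ' : M)
    (hfixF : πF = BRF πL μ) (hfixμ : μ = Γ μ πL πF)
    (hfixF' : πF' = BRF πL' μ') (hfixμ' : μ' = Γ μ' πL' πF') :
    dist πF πF' + dist μ μ'
      ≤ ((dFL + dμL) / (1 - (dFμ + dμμ + dμF))) * dist πL πL' := by
  have h1 : dist πF πF' ≤ dFL * dist πL πL' + dFμ * dist μ μ' := by
    rw [hfixF, hfixF']; exact hBRF _ _ _ _
  have h2 : dist μ μ' ≤ dμμ * dist μ μ' + dμL * dist πL πL' + dμF * dist πF πF' := by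
    conv_lhs => rw [hfixμ, hfixμ']
    exact hΓ _ _ _ _ _ _
  have hs : 0 < 1 - (dFμ + dμμ + dμF) := by linarith
  rw [div_mul_eq_mul_div, le_div_iff₀ hs]
  have ha := dist_nonneg (x := πF) (y := πF')
  have hb := dist_nonneg (x := μ) (y := μ')
  have hL := dist_nonneg (x := πL) (y := πL')
  nlinarith [mul_nonneg hdFμ ha, mul_nonneg hdμF hb]
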